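/- Let k be a perfect field with algebraic closure k̄, and let K be a field extension of k. Then the set of elements t ∈ k̄ ⊗_k K satisfying (σ ⊗ id_K)(t) = t for every σ ∈ Aut(k̄/k) is exactly the image of K under the canonical map x ↦ 1 ⊗ x. (The fixed subring of k̄ ⊗_k K under the Galois action is K.) -/

import Mathlib

open scoped TensorProduct

lemma fixed_mem_range_algebraMap
    (k : Type) [Field k] [PerfectField k] (a : AlgebraicClosure k)
    (h : ∀ σ : AlgebraicClosure k ≃ₐ[k] AlgebraicClosure k, σ a = a) :
    a ∈ (algebraMap k (AlgebraicClosure k)).range := by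
  by_contra h'
  have hsep : IsSeparable k a := Algebra.IsSeparable.isSeparable k a
  have hsp : ((minpoly k a).map (algebraMap k (AlgebraicClosure k))).Splits :=
    Normal.splits inferInstance a
  have hb : a ∉ (⊥ : Subalgebra k (AlgebraicClosure k)) := by
    simpa [Algebra.mem_bot] using h'
  obtain ⟨y, hne, hconj⟩ := (notMem_iff_exists_ne_and_isConjRoot hsep hsp).mp hb
  obtain ⟨σ, hσ⟩ := hconj.exists_algEquiv
  exact hne (σ.injective (by rw [hσ, h σ])).symm

/-- For a field extension `K` of a perfect field `k`, the fixed subring of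
`k̄ ⊗ₖ K` under the Galois action `σ ↦ σ ⊗ id` is exactly the image of `K`
under `x ↦ 1 ⊗ x`. -/
theorem fixedPoints_tensor_algebraicClosure
    (k : Type) [Field k] [PerfectField k]
    (K : Type) [Field K] [Algebra k K] (t : AlgebraicClosure k ⊗[k] K) :
    (∀ σ : AlgebraicClosure k ≃ₐ[k] AlgebraicClosure k,
        Algebra.TensorProduct.map σ.toAlgHom (AlgHom.id k K) t = t) ↔
      t ∈ Set.range (Algebra.TensorProduct.includeRight :
        K →ₐ[k] AlgebraicClosure k ⊗[k] K) := by
  classical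
  constructor
  · intro h
    -- choose a k-basis of K
    set 𝒞 := Module.Basis.ofVectorSpace k K with h𝒞
    obtain ⟨c, rfl⟩ := TensorProduct.eq_repr_basis_right 𝒞 t
    -- the coefficients are fixed by every automorphism
    have hc : ∀ σ : AlgebraicClosure k ≃ₐ[k] AlgebraicClosure k,
        c.mapRange σ (map_zero σ) = c := by
      intro σ
      apply TensorProduct.sum_tmul_basis_right_injective 𝒞
      have := h σ
      simp only [Finsupp.sum, map_sum, Algebra.TensorProduct.map_tmul,
        AlgHom.coe_id, id_eq, AlgEquiv.coe_algHom] at this ⊢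
      simp only [Finsupp.lsum_apply]
      rw [Finsupp.sum_mapRange_index (by simp)]
      simpa [Finsupp.sum, TensorProduct.mk] using this
    have hc' : ∀ i, ∀ σ : AlgebraicClosure k ≃ₐ[k] AlgebraicClosure k,
        σ (c i) = c i := by
      intro i σ
      have := congrArg (fun f => f i) (hc σ)
      simpa using this
    -- hence they come from k
    have hrange : ∀ i, c i ∈ (algebraMap k (AlgebraicClosure k)).range :=
      fun i => fixed_mem_range_algebraMap k (c i) (hc' i)
    -- conclude membership
    have : (c.sum fun i m => m ⊗ₜ[k] 𝒞 i) ∈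
        (Algebra.TensorProduct.includeRight :
          K →ₐ[k] AlgebraicClosure k ⊗[k] K).range := by
      apply Subalgebra.sum_mem
      intro i hi
      obtain ⟨d, hd⟩ := hrange i
      refine ⟨d • 𝒞 i, ?_⟩
      show (Algebra.TensorProduct.includeRight : K →ₐ[k] _) (d • 𝒞 i) = c i ⊗ₜ[k] 𝒞 i
      rw [Algebra.TensorProduct.includeRight_apply, TensorProduct.tmul_smul, TensorProduct.smul_tmul', ← hd,
        Algebra.smul_def, mul_one]
    simpa [AlgHom.mem_range] using this
  · rintro ⟨x, rfl⟩ σ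
    simp
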